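/- The category of persistence modules of finite type (functors N_0 → vec with structure maps eventually isomorphisms) is equivalent to the category of finitely generated N_0-graded k[t]-modules. -/

import Mathlib

open CategoryTheory

/-! The category of finitely generated `ℕ`-graded `k[t]`-modules.  A graded
`k[t]`-module is packaged as its family of graded pieces (each a `k`-vector space)
together with the action of `t` raising the degree by one; a morphism is a family
of degree-preserving linear maps commuting with the `t`-action. -/

/-- An `ℕ`-graded `k[t]`-module, given by its graded pieces and the action of `t`. -/
structure GrMod (k : Type) [Field k] where
  piece : ℕ → Type
  [grp : ∀ n, AddCommGroup (piece n)]
  [mod : ∀ n, Module k (piece n)]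
  act : ∀ n, piece n →ₗ[k] piece (n + 1)

attribute [instance] GrMod.grp GrMod.mod

variable {k : Type} [Field k]

/-- Iterated action of `t`, raising the degree by `j`. -/
noncomputable def GrMod.actIterAux (M : GrMod k) (a : ℕ) :
    (j : ℕ) → (M.piece a →ₗ[k] M.piece (a + j))
  | 0 => LinearMap.id
  | j + 1 => (M.act (a + j)) ∘ₗ (M.actIterAux a j)

/-- Iterated action of `t` from degree `a` to degree `b ≥ a`. -/
noncomputable def GrMod.actIter (M : GrMod k) (a b : ℕ) (h : a ≤ b) :
    M.piece a →ₗ[k] M.piece b :=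
  (Nat.add_sub_cancel' h) ▸ (M.actIterAux a (b - a))

/-- Finite generation of a graded `k[t]`-module: there are finitely many homogeneous
elements whose shifts under the `t`-action span every graded piece. -/
def GrMod.FG (M : GrMod k) : Prop :=
  ∃ s : Finset (Σ n : ℕ, M.piece n), ∀ (m : ℕ) (x : M.piece m),
    x ∈ Submodule.span k
      {y : M.piece m | ∃ g ∈ s, ∃ h : g.1 ≤ m, M.actIter g.1 m h g.2 = y}

instance : Category (GrMod k) where
  Hom M N := {φ : ∀ n, M.piece n →ₗ[k] N.piece n //
    ∀ n, (N.act n) ∘ₗ (φ n) = (φ (n + 1)) ∘ₗ (M.act n)}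
  id M := ⟨fun _ => LinearMap.id, by intro n; simp⟩
  comp φ ψ := ⟨fun n => (ψ.1 n) ∘ₗ (φ.1 n), by
    intro n
    rw [← LinearMap.comp_assoc, ψ.2 n, LinearMap.comp_assoc, φ.2 n, LinearMap.comp_assoc]⟩
  id_comp φ := by apply Subtype.ext; funext n; rfl
  comp_id φ := by apply Subtype.ext; funext n; rfl
  assoc φ ψ χ := by apply Subtype.ext; funext n; rfl

/-- A persistence module (functor `ℕ → vec`) is of finite type if its structure maps
are eventually isomorphisms. -/
def FiniteType (M : ℕ ⥤ FGModuleCat k) : Prop :=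
  ∃ m : ℕ, ∀ i j : ℕ, ∀ h : i ≤ j, m ≤ i → IsIso (M.map h.hom)
namespace GrMod

variable {k : Type} [Field k] (M : GrMod k)

theorem actIter_eq_aux (a j : ℕ) (h : a ≤ a + j) :
    M.actIter a (a + j) h = M.actIterAux a j := by
  unfold GrMod.actIter
  have e : a + j - a = j := by omega
  generalize Nat.add_sub_cancel' h = e'
  revert e'
  rw [e]
  intro e'
  rfl

theorem actIter_self (a : ℕ) (h : a ≤ a) : M.actIter a a h = LinearMap.id :=
  M.actIter_eq_aux a 0 h

theorem actIter_succ {a b : ℕ} (h : a ≤ b) (h' : a ≤ b + 1) :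
    M.actIter a (b + 1) h' = (M.act b) ∘ₗ (M.actIter a b h) := by
  obtain ⟨j, rfl⟩ := Nat.exists_eq_add_of_le h
  rw [M.actIter_eq_aux a j h]
  exact M.actIter_eq_aux a (j + 1) h'

theorem actIter_one (a : ℕ) (h : a ≤ a + 1) : M.actIter a (a + 1) h = M.act a := by
  rw [M.actIter_succ (le_refl a) h, M.actIter_self, LinearMap.comp_id]

theorem actIter_trans {a b c : ℕ} (h1 : a ≤ b) (h2 : b ≤ c) :
    (M.actIter b c h2) ∘ₗ (M.actIter a b h1) = M.actIter a c (h1.trans h2) := by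
  induction c, h2 using Nat.le_induction with
  | base => rw [M.actIter_self, LinearMap.id_comp]
  | succ c hc ih =>
      rw [M.actIter_succ hc (hc.trans (Nat.le_succ c)), LinearMap.comp_assoc, ih,
        M.actIter_succ (h1.trans hc)]

theorem hom_comm_actIter {N : GrMod k} (φ : M ⟶ N) {a b : ℕ} (h : a ≤ b) :
    (φ.1 b) ∘ₗ (M.actIter a b h) = (N.actIter a b h) ∘ₗ (φ.1 a) := by
  induction b, h using Nat.le_induction with
  | base => rw [M.actIter_self, N.actIter_self, LinearMap.id_comp, LinearMap.comp_id]
  | succ b hb ih =>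
      rw [M.actIter_succ hb, N.actIter_succ hb, ← LinearMap.comp_assoc, ← φ.2 b,
        LinearMap.comp_assoc, ih, LinearMap.comp_assoc]

end GrMod
namespace GrMod

variable {k : Type} [Field k] {M : GrMod k}

/-- The graded pieces of a finitely generated graded module are finite dimensional. -/
theorem FG.finite (hM : M.FG) (n : ℕ) : Module.Finite k (M.piece n) := by
  classical
  obtain ⟨s, hs⟩ := hM
  set f : (Σ m : ℕ, M.piece m) → M.piece n :=
    fun g => if h : g.1 ≤ n then M.actIter g.1 n h g.2 else 0 with hf
  have hsub : {y : M.piece n | ∃ g ∈ s, ∃ h : g.1 ≤ n, M.actIter g.1 n h g.2 = y}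
      ⊆ f '' ↑s := by
    rintro y ⟨g, hg, h, rfl⟩
    exact ⟨g, hg, by simp [hf, h]⟩
  have htop : Submodule.span k (↑(s.image f) : Set (M.piece n)) = ⊤ := by
    rw [Finset.coe_image]
    refine top_unique fun x _ => ?_
    exact Submodule.span_mono hsub (hs n x)
  exact ⟨⟨s.image f, htop⟩⟩

/-- Beyond the degrees of the generators, the action maps are surjective. -/
theorem FG.act_surjective (hM : M.FG) :
    ∃ m₀ : ℕ, ∀ n, m₀ ≤ n → Function.Surjective (M.act n) := by
  obtain ⟨s, hs⟩ := hM
  refine ⟨s.sup Sigma.fst, fun n hn x => ?_⟩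
  have : {y : M.piece (n + 1) |
      ∃ g ∈ s, ∃ h : g.1 ≤ n + 1, M.actIter g.1 (n + 1) h g.2 = y}
      ⊆ ↑(LinearMap.range (M.act n)) := by
    rintro y ⟨g, hg, h, rfl⟩
    have hgn : g.1 ≤ n := le_trans (Finset.le_sup hg) hn
    rw [M.actIter_succ hgn h]
    exact ⟨M.actIter g.1 n hgn g.2, rfl⟩
  exact Submodule.span_le.mpr this (hs (n + 1) x)

end GrMod
namespace GrMod

variable {k : Type} [Field k] {M : GrMod k}

theorem FG.exists_act_bijective (hM : M.FG) :
    ∃ N : ℕ, ∀ n, N ≤ n → Function.Bijective (M.act n) := by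
  obtain ⟨m₀, hsurj⟩ := hM.act_surjective
  haveI : ∀ n, Module.Finite k (M.piece n) := hM.finite
  set D : ℕ → ℕ := fun j => Module.finrank k (M.piece (m₀ + j)) with hD
  have hstep : ∀ j, D (j + 1) ≤ D j := by
    intro j
    have hs := hsurj (m₀ + j) (Nat.le_add_right _ _)
    have hle := LinearMap.finrank_range_le (M.act (m₀ + j))
    rw [LinearMap.range_eq_top.mpr hs, finrank_top] at hle
    exact hle
  have hmono : ∀ j j', j ≤ j' → D j' ≤ D j := by
    intro j j' h
    induction j', h using Nat.le_induction with
    | base => exact le_refl _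
    | succ j' hj ih => exact le_trans (hstep j') ih
  set c := sInf (Set.range D) with hc
  obtain ⟨j₀, hj₀⟩ : c ∈ Set.range D := Nat.sInf_mem ⟨D 0, 0, rfl⟩
  have hconst : ∀ j, j₀ ≤ j → D j = c := fun j hj =>
    le_antisymm (hj₀ ▸ hmono j₀ j hj) (Nat.sInf_le ⟨j, rfl⟩)
  refine ⟨m₀ + j₀, fun n hn => ?_⟩
  obtain ⟨j', rfl⟩ := Nat.exists_eq_add_of_le hn
  have hsur := hsurj (m₀ + j₀ + j') (by omega)
  have heq : Module.finrank k (M.piece (m₀ + j₀ + j')) =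
      Module.finrank k (M.piece (m₀ + j₀ + j' + 1)) := by
    have h1 : D (j₀ + j') = c := hconst _ (Nat.le_add_right _ _)
    have h2 : D (j₀ + j' + 1) = c := hconst _ (by omega)
    rw [show m₀ + j₀ + j' + 1 = m₀ + (j₀ + j' + 1) from by omega,
      show m₀ + j₀ + j' = m₀ + (j₀ + j') from by omega]
    exact h1.trans h2.symm
  exact ⟨(LinearMap.injective_iff_surjective_of_finrank_eq_finrank
    (f := M.act (m₀ + j₀ + j')) heq).mpr hsur, hsur⟩

theorem actIter_bijective {N : ℕ} (hbij : ∀ n, N ≤ n → Function.Bijective (M.act n))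
    {a b : ℕ} (hN : N ≤ a) (h : a ≤ b) : Function.Bijective (M.actIter a b h) := by
  induction b, h using Nat.le_induction with
  | base => rw [M.actIter_self]; exact Function.bijective_id
  | succ b hb ih =>
      rw [M.actIter_succ hb, LinearMap.coe_comp]
      exact (hbij b (hN.trans hb)).comp ih

end GrMod
/-- The graded module associated to a persistence module. -/
noncomputable def toGr (M : ℕ ⥤ FGModuleCat k) : GrMod k where
  piece n := M.obj n
  act n := (M.map (homOfLE (Nat.le_succ n))).hom.hom

theorem toGr_actIter (M : ℕ ⥤ FGModuleCat k) {a b : ℕ} (h : a ≤ b) :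
    (toGr M).actIter a b h = (M.map (homOfLE h)).hom.hom := by
  induction b, h using Nat.le_induction with
  | base => rw [GrMod.actIter_self]; exact congrArg (fun f => f.hom.hom) (M.map_id a).symm
  | succ b hb ih =>
      rw [GrMod.actIter_succ _ hb, ih]
      exact congrArg (fun f => f.hom.hom) (M.map_comp (homOfLE hb) (homOfLE (Nat.le_succ b))).symm

/-- The persistence module associated to a graded module with finite pieces. -/
noncomputable def persOf (M : GrMod k) (hM : ∀ n, Module.Finite k (M.piece n)) :
    ℕ ⥤ FGModuleCat k where
  obj n := @FGModuleCat.of k _ (M.piece n) _ _ (hM n)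
  map {i j} f := ObjectProperty.homMk (ModuleCat.ofHom (M.actIter i j (leOfHom f)))
  map_id n := FGModuleCat.hom_ext (M.actIter_self n (le_refl n))
  map_comp {i j l} f g := FGModuleCat.hom_ext (M.actIter_trans (leOfHom f) (leOfHom g)).symm

theorem toGr_fg {M : ℕ ⥤ FGModuleCat k} (hM : FiniteType M) : (toGr M).FG := by
  classical
  obtain ⟨m₀, hm₀⟩ := hM
  -- choose finite spanning sets for each piece
  have hfin : ∀ n : ℕ, ∃ S : Finset (M.obj n),
      Submodule.span k (↑S : Set (M.obj n)) = ⊤ :=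
    fun n => Module.Finite.iff_fg.mp (by infer_instance)
  choose S hS using hfin
  refine ⟨(Finset.range (m₀ + 1)).biUnion
    (fun n => (S n).image (Sigma.mk n : (toGr M).piece n → Σ m, (toGr M).piece m)), ?_⟩
  intro m x
  by_cases hm : m ≤ m₀
  · have hsub : (↑(S m) : Set (M.obj m)) ⊆
        {y : (toGr M).piece m | ∃ g ∈ (Finset.range (m₀ + 1)).biUnion
          (fun n => (S n).image (Sigma.mk n)), ∃ h : g.1 ≤ m,
          (toGr M).actIter g.1 m h g.2 = y} := by
      intro v hv
      refine ⟨⟨m, v⟩, ?_, le_refl m, ?_⟩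
      · exact Finset.mem_biUnion.mpr ⟨m, Finset.mem_range.mpr (by omega),
          Finset.mem_image_of_mem _ hv⟩
      · rw [GrMod.actIter_self]; rfl
    exact Submodule.span_mono hsub (show x ∈ Submodule.span k (↑(S m) : Set (M.obj m)) by rw [hS m]; trivial)
  · push_neg at hm
    have hle : m₀ ≤ m := hm.le
    have hiso := hm₀ m₀ m hle (le_refl m₀)
    set f := M.map hle.hom with hf
    -- f is surjective
    obtain ⟨y, hy⟩ : ∃ y, f y = x := by
      refine ⟨CategoryTheory.inv f x, ?_⟩
      have := congrArg (fun g : M.obj m ⟶ M.obj m => ConcreteCategory.hom g x) (IsIso.inv_hom_id f)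
      exact this
    have hy' : y ∈ Submodule.span k (↑(S m₀) : Set (M.obj m₀)) := by
      rw [hS m₀]; trivial
    have himg : x ∈ Submodule.map ((toGr M).actIter m₀ m hle)
        (Submodule.span k (@id (Set ((toGr M).piece m₀)) (S m₀ : Set (M.obj m₀)))) := by
      refine ⟨y, hy', ?_⟩
      rw [toGr_actIter M hle]
      exact hy
    rw [Submodule.map_span] at himg
    refine Submodule.span_mono ?_ himg
    rintro y' ⟨v, hv, rfl⟩
    refine ⟨⟨m₀, v⟩, ?_, hle, rfl⟩
    exact Finset.mem_biUnion.mpr ⟨m₀, Finset.mem_range.mpr (by omega),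
      Finset.mem_image_of_mem _ hv⟩

theorem persOf_finiteType (M : GrMod k) (hM : M.FG) :
    FiniteType (persOf M hM.finite) := by
  obtain ⟨N, hN⟩ := hM.exists_act_bijective
  refine ⟨N, fun i j h hi => ?_⟩
  have hbij : Function.Bijective (M.actIter i j (leOfHom h.hom)) :=
    M.actIter_bijective hN hi (leOfHom h.hom)
  set e := LinearEquiv.ofBijective (M.actIter i j (leOfHom h.hom)) hbij with he
  refine ⟨ObjectProperty.homMk (ModuleCat.ofHom e.symm.toLinearMap), ?_, ?_⟩
  · ext x
    exact e.symm_apply_apply x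
  · ext x
    exact e.apply_symm_apply x

theorem persOf_toGr_map (M : ℕ ⥤ FGModuleCat k)
    (hfin : ∀ n, Module.Finite k ((toGr M).piece n)) {i j : ℕ} (f : i ⟶ j) :
    (persOf (toGr M) hfin).map f = M.map f := by
  have h := toGr_actIter M (leOfHom f)
  exact FGModuleCat.hom_ext (h.trans (congrArg (fun g => (M.map g).hom.hom) (by apply Subsingleton.elim)))

theorem toGr_persOf_act (M : GrMod k) (hfin : ∀ n, Module.Finite k (M.piece n))
    (n : ℕ) : (toGr (persOf M hfin)).act n = M.act n :=
  M.actIter_one n (Nat.le_succ n)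

/-- The functor from persistence modules of finite type to f.g. graded modules. -/
noncomputable def persToGr :
    ObjectProperty.FullSubcategory (fun M : ℕ ⥤ FGModuleCat k => FiniteType M) ⥤
      ObjectProperty.FullSubcategory (fun M : GrMod k => M.FG) where
  obj X := ⟨toGr X.obj, toGr_fg X.property⟩
  map {X Y} η := ⟨⟨fun n => (η.hom.app n).hom.hom, fun n =>
    congrArg (fun f => f.hom.hom) (η.hom.naturality (homOfLE (Nat.le_succ n))).symm⟩⟩
  map_id X := rfl
  map_comp f g := rfl

/-- The functor from f.g. graded modules to persistence modules of finite type. -/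
noncomputable def grToPers :
    ObjectProperty.FullSubcategory (fun M : GrMod k => M.FG) ⥤
      ObjectProperty.FullSubcategory (fun M : ℕ ⥤ FGModuleCat k => FiniteType M) where
  obj X := ⟨persOf X.obj X.property.finite, persOf_finiteType X.obj X.property⟩
  map {X Y} φ :=
    ObjectProperty.homMk
    { app := fun n => ObjectProperty.homMk (ModuleCat.ofHom (φ.hom.1 n))
      naturality := fun i j f => FGModuleCat.hom_ext (GrMod.hom_comm_actIter _ φ.hom (leOfHom f)) }
  map_id X := rfl
  map_comp f g := rfl

/-- Unit isomorphism component. -/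
noncomputable def unitApp (X : ObjectProperty.FullSubcategory (fun M : ℕ ⥤ FGModuleCat k => FiniteType M)) :
    X ≅ (persToGr ⋙ grToPers).obj X where
  hom :=
    ObjectProperty.homMk
    { app := fun n => ObjectProperty.homMk (ModuleCat.ofHom (LinearMap.id : X.obj.obj n →ₗ[k] X.obj.obj n))
      naturality := by
        intro i j f
        show X.obj.map f ≫ _ = _ ≫ ((persToGr ⋙ grToPers).obj X).obj.map f
        rw [show ((persToGr ⋙ grToPers).obj X).obj.map f = X.obj.map f from
          persOf_toGr_map X.obj _ f]
        rfl }
  inv :=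
    ObjectProperty.homMk
    { app := fun n => ObjectProperty.homMk (ModuleCat.ofHom (LinearMap.id : X.obj.obj n →ₗ[k] X.obj.obj n))
      naturality := by
        intro i j f
        show ((persToGr ⋙ grToPers).obj X).obj.map f ≫ _ = _ ≫ X.obj.map f
        rw [show ((persToGr ⋙ grToPers).obj X).obj.map f = X.obj.map f from
          persOf_toGr_map X.obj _ f]
        rfl }
  hom_inv_id := by
    ext n x; rfl
  inv_hom_id := by
    ext n x; rfl

/-- Counit isomorphism component. -/
noncomputable def counitApp (Y : ObjectProperty.FullSubcategory (fun M : GrMod k => M.FG)) :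
    (grToPers ⋙ persToGr).obj Y ≅ Y where
  hom := ⟨⟨fun n => (LinearMap.id : Y.obj.piece n →ₗ[k] Y.obj.piece n), by
    intro n
    ext x; exact congrArg (fun g => g x) (toGr_persOf_act Y.obj _ n).symm⟩⟩
  inv := ⟨⟨fun n => (LinearMap.id : Y.obj.piece n →ₗ[k] Y.obj.piece n), by
    intro n
    ext x; exact congrArg (fun g : Y.obj.piece n →ₗ[k] Y.obj.piece (n + 1) => g x) (toGr_persOf_act Y.obj Y.property.finite n)⟩⟩
  hom_inv_id := by
    apply ObjectProperty.hom_ext; apply Subtype.ext; funext n; exact LinearMap.id_comp _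
  inv_hom_id := by
    apply ObjectProperty.hom_ext; apply Subtype.ext; funext n; exact LinearMap.id_comp _

noncomputable def equivZero (k : Type) [Field k] :
    (ObjectProperty.FullSubcategory (fun M : ℕ ⥤ FGModuleCat.{0} k => FiniteType M)) ≌
      ObjectProperty.FullSubcategory (fun M : GrMod k => M.FG) := by
  refine CategoryTheory.Equivalence.mk persToGr grToPers
    (NatIso.ofComponents unitApp ?_) (NatIso.ofComponents counitApp ?_)
  · intro X Y η
    ext n x; rfl
  · intro X Y φ
    apply ObjectProperty.hom_ext; apply Subtype.ext; funext n
    exact (LinearMap.id_comp _).trans (LinearMap.comp_id _).symm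

universe u v

theorem finiteType_comp_iff {M : ℕ ⥤ FGModuleCat.{u} k} (G : FGModuleCat.{u} k ⥤ FGModuleCat.{v} k)
    [G.IsEquivalence] : FiniteType (M ⋙ G) ↔ FiniteType M := by
  constructor
  · rintro ⟨m, hm⟩
    refine ⟨m, fun i j h hi => ?_⟩
    haveI : IsIso (G.map (M.map h.hom)) := hm i j h hi
    exact isIso_of_reflects_iso (M.map h.hom) G
  · rintro ⟨m, hm⟩
    refine ⟨m, fun i j h hi => ?_⟩
    haveI := hm i j h hi
    exact (inferInstance : IsIso (G.map (M.map h.hom)))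

theorem finiteType_isClosed :
    ObjectProperty.IsClosedUnderIsomorphisms (fun M : ℕ ⥤ FGModuleCat.{u} k => FiniteType M) where
  of_iso {M N} e hM := by
    obtain ⟨m, hm⟩ := hM
    refine ⟨m, fun i j h hi => ?_⟩
    haveI := hm i j h hi
    rw [← NatIso.naturality_1 e h.hom]
    infer_instance

theorem persistence_equiv_graded (k : Type) [Field k] :
    Nonempty ((ObjectProperty.FullSubcategory (fun M : ℕ ⥤ FGModuleCat k => FiniteType M)) ≌
      ObjectProperty.FullSubcategory (fun M : GrMod k => M.FG)) := by
  haveI := finiteType_isClosed (k := k)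
  exact ⟨((Equivalence.congrRight (E := ℕ) (FGModuleCat.ulift.{0} k).asEquivalence.symm).congrFullSubcategory
    (by funext M; exact propext (finiteType_comp_iff _))).trans (equivZero k)⟩
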